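/- Let 𝓗 = (V,H) be a finite loopless undirected hypergraph and let x ≠ y be vertices in the same connected component, each having at least one neighbour. Then the equal-nodes Ollivier–Ricci curvature κ_EN(x,y) equals 1 if and only if x and y are weakly structurally equivalent, i.e. N(x) = N(y). -/

import Mathlib

/-!
STATEMENT 11: Let 𝓗 = (V,H) be a finite loopless undirected hypergraph and let
x ≠ y be vertices in the same connected component, each having at least one
neighbour. Then the equal-nodes Ollivier–Ricci curvature κ_EN(x,y) equals 1 if
and only if x and y are weakly structurally equivalent, i.e. N(x) = N(y).
-/

open Finset

variable {V : Type*}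

/-- Two distinct vertices are neighbours in the hypergraph `H` if some hyperedge
contains both. -/
def HNbr (H : Finset (Finset V)) (u v : V) : Prop :=
  u ≠ v ∧ ∃ e ∈ H, u ∈ e ∧ v ∈ e

/-- `IsHPath H u v emptyset vs es` says that the list of vertices `vs` together with
the list of hyperedges `es` forms a path from `u` to `v` in the hypergraph `H`:
consecutive vertices lie in the corresponding hyperedge, and all vertices and
all hyperedges are distinct. -/
def IsHPath (H : Finset (Finset V)) (u v : V)
    (vs : List V) (es : List (Finset V)) : Prop :=
  vs.length = es.length + 1 ∧
  vs.head? = some u ∧ vs.getLast? = some v ∧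
  vs.Nodup ∧ es.Nodup ∧ (∀ e ∈ es, e ∈ H) ∧
  ∀ i < es.length, vs.getD i u ∈ es.getD i ∅ ∧ vs.getD (i + 1) u ∈ es.getD i ∅

/-- There is a path of length `n` between `u` and `v` in the hypergraph `H`. -/
def HPathLen (H : Finset (Finset V)) (n : ℕ) (u v : V) : Prop :=
  ∃ vs es, IsHPath H u v vs es ∧ es.length = n

/-- The shortest-path distance in a hypergraph: the minimum length of a path. -/
noncomputable def hdist (H : Finset (Finset V)) (u v : V) : ℕ :=
  sInf {n | HPathLen H n u v}

-- The set of neighbours of `x` in the hypergraph `H`, as a finset.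
open Classical in
noncomputable def HNbrFinset [Fintype V] (H : Finset (Finset V)) (x : V) :
    Finset V :=
  Finset.univ.filter (fun z => HNbr H x z)

-- The equal-nodes (EN) measure of a vertex `x`: uniform on its neighbours.
open Classical in
noncomputable def muEN [Fintype V] (H : Finset (Finset V)) (x : V) : V → ℝ :=
  fun z => if HNbr H x z then 1 / ((HNbrFinset H x).card : ℝ) else 0

/-- A coupling of two measures `μ` and `ν` on a finite vertex set. -/
def IsCoupling [Fintype V] (μ ν : V → ℝ) (ξ : V → V → ℝ) : Prop :=
  (∀ u v, 0 ≤ ξ u v) ∧ (∀ u, ∑ v, ξ u v = μ u) ∧ (∀ v, ∑ u, ξ u v = ν v)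

/-- The 1-Wasserstein distance between `μ` and `ν` with respect to the distance
function `d`. -/
noncomputable def W1 [Fintype V] (d : V → V → ℝ) (μ ν : V → ℝ) : ℝ :=
  sInf {c | ∃ ξ : V → V → ℝ, IsCoupling μ ν ξ ∧ c = ∑ u, ∑ v, d u v * ξ u v}

/-- The equal-nodes Ollivier–Ricci curvature of a pair of vertices. -/
noncomputable def kappaEN [Fintype V] (H : Finset (Finset V)) (x y : V) : ℝ :=
  1 - W1 (fun u v => (hdist H u v : ℝ)) (muEN H x) (muEN H y) / (hdist H x y)

-- AUX

lemma getElem_idx {α : Type*} (l : List α) {i j : ℕ} (hij : i = j) (hi : i < l.length) :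
    l[i]'hi = l[j]'(hij ▸ hi) := by subst hij; rfl

lemma isHPath_iff {H : Finset (Finset V)} {u v : V} {vs : List V} {es : List (Finset V)} :
    IsHPath H u v vs es ↔
    ∃ hlen : vs.length = es.length + 1,
      vs[0]'(by omega) = u ∧ vs[es.length]'(by omega) = v ∧
      vs.Nodup ∧ es.Nodup ∧ (∀ e ∈ es, e ∈ H) ∧
      ∀ i, (hi : i < es.length) → vs[i]'(by omega) ∈ es[i]'hi ∧ vs[i+1]'(by omega) ∈ es[i]'hi := by
  constructor
  · rintro ⟨hlen, hh, hl, h1, h2, h3, h4⟩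
    have hne : vs ≠ [] := by intro h; simp [h] at hlen
    refine ⟨hlen, ?_, ?_, h1, h2, h3, ?_⟩
    · rw [List.head?_eq_head hne, List.head_eq_getElem] at hh
      exact Option.some_inj.mp hh
    · rw [List.getLast?_eq_getLast hne, List.getLast_eq_getElem] at hl
      have h5 := Option.some_inj.mp hl
      rwa [getElem_idx vs (show vs.length - 1 = es.length by omega)] at h5
    · intro i hi
      have c := h4 i hi
      rwa [List.getD_eq_getElem vs u (by omega), List.getD_eq_getElem vs u (by omega),
        List.getD_eq_getElem es ∅ hi] at c
  · rintro ⟨hlen, hh, hl, h1, h2, h3, h4⟩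
    have hne : vs ≠ [] := by intro h; simp [h] at hlen
    refine ⟨hlen, ?_, ?_, h1, h2, h3, ?_⟩
    · rw [List.head?_eq_head hne, List.head_eq_getElem, hh]
    · rw [List.getLast?_eq_getLast hne, List.getLast_eq_getElem,
        getElem_idx vs (show vs.length - 1 = es.length by omega), hl]
    · intro i hi
      rw [List.getD_eq_getElem vs u (by omega), List.getD_eq_getElem vs u (by omega),
        List.getD_eq_getElem es ∅ hi]
      exact h4 i hi

lemma IsHPath.drop {H : Finset (Finset V)} {u v : V} {vs : List V} {es : List (Finset V)}
    (hp : IsHPath H u v vs es) (k : ℕ) (hk : k ≤ es.length) :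
    IsHPath H (vs[k]'(by have := hp.1; omega)) v (vs.drop k) (es.drop k) := by
  rw [isHPath_iff] at hp ⊢
  obtain ⟨hlen, hh, hl, h1, h2, h3, h4⟩ := hp
  have hlen' : (vs.drop k).length = (es.drop k).length + 1 := by
    simp only [List.length_drop]; omega
  refine ⟨hlen', ?_, ?_, h1.sublist (List.drop_sublist _ _), h2.sublist (List.drop_sublist _ _),
    fun e he => h3 e (List.mem_of_mem_drop he), ?_⟩
  · rw [List.getElem_drop]; congr 1
  · rw [List.getElem_drop, getElem_idx vs (show k + (es.drop k).length = es.length by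
      simp only [List.length_drop]; omega), hl]
  · intro i hi
    simp only [List.length_drop] at hi
    constructor
    · rw [List.getElem_drop, List.getElem_drop]
      exact (h4 (k+i) (by omega)).1
    · rw [List.getElem_drop, List.getElem_drop,
        getElem_idx vs (show k + (i+1) = (k+i) + 1 by omega)]
      exact (h4 (k+i) (by omega)).2

lemma IsHPath.cons {H : Finset (Finset V)} {u v : V} {vs : List V} {es : List (Finset V)}
    {w : V} (hp : IsHPath H w v vs es) (e : Finset V) (heH : e ∈ H)
    (hu : u ∉ vs) (hee : e ∉ es) (hue : u ∈ e) (hve : w ∈ e) :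
    IsHPath H u v (u :: vs) (e :: es) := by
  rw [isHPath_iff] at hp ⊢
  obtain ⟨hlen, hh, hl, h1, h2, h3, h4⟩ := hp
  refine ⟨by simp [hlen], rfl, ?_, by simp [hu, h1], by simp [hee, h2],
    fun e' he' => by rcases List.mem_cons.mp he' with h|h
                     · exact h ▸ heH
                     · exact h3 e' h, ?_⟩
  · simpa using hl
  · intro i hi
    match i with
    | 0 => exact ⟨hue, by simpa [hh] using hve⟩
    | (j+1) =>
      simp only [List.getElem_cons_succ]
      exact h4 j (by simpa using hi)

lemma hPathLen_zero {H : Finset (Finset V)} {u v : V} (h : HPathLen H 0 u v) : u = v := by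
  obtain ⟨vs, es, hp, hn⟩ := h
  rw [isHPath_iff] at hp
  obtain ⟨hlen, hh, hl, -⟩ := hp
  rw [← hh, ← hl, getElem_idx vs (show (0:ℕ) = es.length by omega)]

lemma hPathLen_refl (H : Finset (Finset V)) (u : V) : HPathLen H 0 u u := by
  refine ⟨[u], [], ?_, rfl⟩
  rw [isHPath_iff]
  exact ⟨by simp, rfl, rfl, by simp, by simp, by simp, fun i hi => by simp at hi⟩

lemma hPathLen_one {H : Finset (Finset V)} {u v : V} (h : HNbr H u v) : HPathLen H 1 u v := by
  obtain ⟨hne, e, heH, hue, hve⟩ := h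
  refine ⟨[u, v], [e], ?_, rfl⟩
  rw [isHPath_iff]
  refine ⟨by simp, rfl, rfl, by simp [hne], by simp, by simp [heH], ?_⟩
  intro i hi
  simp only [List.length_singleton] at hi
  interval_cases i
  exact ⟨hue, hve⟩

/-- Reflexive-transitive closure of "sharing a hyperedge". -/
def HReach (H : Finset (Finset V)) : V → V → Prop :=
  Relation.ReflTransGen (fun a b => ∃ e ∈ H, a ∈ e ∧ b ∈ e)

lemma isHPath_to_reach {H : Finset (Finset V)} :
    ∀ {es : List (Finset V)} {u v : V} {vs : List V},
      IsHPath H u v vs es → HReach H u v := by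
  intro es
  induction es with
  | nil =>
    intro u v vs hp
    have : u = v := hPathLen_zero ⟨vs, [], hp, rfl⟩
    exact this ▸ Relation.ReflTransGen.refl
  | cons e es' ih =>
    intro u v vs hp
    have hlen := hp.1
    have hp' := hp.drop 1 (by simp)
    simp only [List.drop_one, List.drop] at hp'
    have h1lt : 1 < vs.length := by simp at hlen; omega
    have hstep : ∃ f ∈ H, u ∈ f ∧ vs[1]'h1lt ∈ f := by
      have hiff := isHPath_iff.mp hp
      obtain ⟨hl2, hh, -, -, -, h3, h4⟩ := hiff
      refine ⟨e, h3 e (by simp), ?_, ?_⟩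
      · have := (h4 0 (by simp)).1; simpa [hh] using this
      · have := (h4 0 (by simp)).2; simpa using this
    have htail : IsHPath H (vs[1]'(by have := hp.1; simp at this ⊢; omega)) v vs.tail es' := by
      simpa [List.drop_one] using hp.drop 1 (by simp)
    exact Relation.ReflTransGen.head hstep (ih htail)

lemma extend_aux {H : Finset (Finset V)} {u v : V} (huv : u ≠ v) :
    ∀ n : ℕ, ∀ w : V, ∀ vs : List V, ∀ es : List (Finset V),
      IsHPath H w v vs es → es.length = n → (∃ e ∈ H, u ∈ e ∧ w ∈ e) →
      ∃ m, HPathLen H m u v := by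
  classical
  intro n
  induction n using Nat.strong_induction_on with
  | _ n IH =>
    rintro w vs es hp hlen ⟨e, heH, hue, hwe⟩
    by_cases hu : u ∈ vs
    · -- u lies on the path: take the suffix from u
      have hk : vs.idxOf u < vs.length := List.idxOf_lt_length_iff.mpr hu
      have hk' : vs.idxOf u ≤ es.length := by have := hp.1; omega
      have hdrop := hp.drop (vs.idxOf u) hk'
      rw [List.getElem_idxOf] at hdrop
      exact ⟨_, _, _, hdrop, rfl⟩
    · by_cases he : e ∈ es
      · -- the connecting edge already appears in the path: shortcut
        have hj : es.idxOf e < es.length := List.idxOf_lt_length_iff.mpr he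
        have hdrop := hp.drop (es.idxOf e + 1) (by omega)
        set j := es.idxOf e with hjdef
        have hwj : vs[j+1]'(by have := hp.1; omega) ∈ e := by
          have h4 := (isHPath_iff.mp hp).2.2.2.2.2.2
          have := (h4 j hj).2
          rwa [List.getElem_idxOf hj] at this
        by_cases hq : u = vs[j+1]'(by have := hp.1; omega)
        · exact ⟨_, _, _, hq ▸ hdrop, rfl⟩
        · refine IH (es.length - (j+1)) (by omega) _ _ _ hdrop
            (by simp only [List.length_drop, hjdef]) ⟨e, heH, hue, hwj⟩
      · -- prepend u to the path
        exact ⟨_, _, _, hp.cons e heH hu he hue hwe, rfl⟩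

lemma reach_to_path {H : Finset (Finset V)} {u v : V} (h : HReach H u v) :
    u = v ∨ ∃ n, HPathLen H n u v := by
  induction h using Relation.ReflTransGen.head_induction_on with
  | refl => exact Or.inl rfl
  | head hac hcb ih =>
    rename_i a c
    by_cases hav : a = v
    · exact Or.inl hav
    · refine Or.inr ?_
      rcases ih with hcv | ⟨n, vs, es, hp, hlen⟩
      · cases hcv
        obtain ⟨vs1, es1, hp1, hlen1⟩ := hPathLen_refl H v
        exact extend_aux hav es1.length v vs1 es1 hp1 rfl hac
      · exact extend_aux hav es.length c vs es hp rfl hac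

lemma hdist_self (H : Finset (Finset V)) (u : V) : hdist H u u = 0 :=
  Nat.sInf_eq_zero.mpr (Or.inl (hPathLen_refl H u))

lemma one_le_hdist {H : Finset (Finset V)} {u v : V} (huv : u ≠ v)
    (h : ∃ n, HPathLen H n u v) : 1 ≤ hdist H u v := by
  have hne : {n | HPathLen H n u v}.Nonempty := h
  have hmem := Nat.sInf_mem hne
  by_contra hlt
  have h0 : sInf {n | HPathLen H n u v} = 0 := by unfold hdist at hlt; omega
  rw [h0] at hmem
  exact huv (hPathLen_zero hmem)

lemma dist_ge_one {H : Finset (Finset V)} {x y a b : V}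
    (hcomp : ∃ n, HPathLen H n x y)
    (ha : HNbr H x a) (hb : HNbr H y b) (hab : a ≠ b) : 1 ≤ hdist H a b := by
  apply one_le_hdist hab
  obtain ⟨n, vsn, esn, hpn, -⟩ := hcomp
  have r1 : HReach H a x := by
    obtain ⟨-, e, heH, hxe, hae⟩ := ha
    exact Relation.ReflTransGen.single ⟨e, heH, hae, hxe⟩
  have r2 : HReach H x y := isHPath_to_reach hpn
  have r3 : HReach H y b := by
    obtain ⟨-, e, heH, hye, hbe⟩ := hb
    exact Relation.ReflTransGen.single ⟨e, heH, hye, hbe⟩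
  have := (r1.trans r2).trans r3
  rcases reach_to_path this with rfl | h
  · exact absurd rfl hab
  · exact h

-- Measure lemmas

lemma mem_HNbrFinset [Fintype V] {H : Finset (Finset V)} {x z : V} :
    z ∈ HNbrFinset H x ↔ HNbr H x z := by
  classical
  simp [HNbrFinset]

lemma muEN_nonneg [Fintype V] (H : Finset (Finset V)) (x z : V) : 0 ≤ muEN H x z := by
  simp only [muEN]
  split
  · positivity
  · exact le_refl 0

lemma muEN_of_not_nbr [Fintype V] {H : Finset (Finset V)} {x z : V} (h : ¬ HNbr H x z) :
    muEN H x z = 0 := by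
  simp [muEN, h]

lemma muEN_pos [Fintype V] {H : Finset (Finset V)} {x z : V} (h : HNbr H x z) :
    0 < muEN H x z := by
  classical
  have hc : 0 < (HNbrFinset H x).card := Finset.card_pos.mpr ⟨z, mem_HNbrFinset.mpr h⟩
  have hc' : (0:ℝ) < ((HNbrFinset H x).card : ℝ) := by exact_mod_cast hc
  simp only [muEN, h, if_true]
  positivity

lemma muEN_sum [Fintype V] (H : Finset (Finset V)) (x : V) (hx : ∃ z, HNbr H x z) :
    ∑ z, muEN H x z = 1 := by
  classical
  obtain ⟨z0, hz0⟩ := hx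
  have hc : 0 < (HNbrFinset H x).card := Finset.card_pos.mpr ⟨z0, mem_HNbrFinset.mpr hz0⟩
  have hc' : ((HNbrFinset H x).card : ℝ) ≠ 0 := by
    exact_mod_cast Nat.pos_iff_ne_zero.mp hc
  have h1 : ∑ z, muEN H x z = ∑ z ∈ HNbrFinset H x, muEN H x z := by
    symm
    apply Finset.sum_subset (Finset.subset_univ _)
    intro z _ hz
    exact muEN_of_not_nbr (fun h => hz (mem_HNbrFinset.mpr h))
  have h2 : ∑ z ∈ HNbrFinset H x, muEN H x z
      = ∑ _z ∈ HNbrFinset H x, (1 / ((HNbrFinset H x).card : ℝ)) := by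
    apply Finset.sum_congr rfl
    intro z hz
    simp [muEN, mem_HNbrFinset.mp hz]
  rw [h1, h2, Finset.sum_const, nsmul_eq_mul]
  field_simp

theorem stmt11 [Fintype V] (H : Finset (Finset V))
    (hloopless : ∀ e ∈ H, 2 ≤ e.card)
    (x y : V) (hxy : x ≠ y)
    (hcomp : ∃ n, HPathLen H n x y)
    (hx : ∃ z, HNbr H x z) (hy : ∃ z, HNbr H y z) :
    kappaEN H x y = 1 ↔ (∀ z, HNbr H x z ↔ HNbr H y z) := by
  classical
  have hdnn : ∀ u v : V, (0:ℝ) ≤ (hdist H u v : ℝ) := fun u v => Nat.cast_nonneg _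
  have hSnonneg : ∀ c ∈ {c | ∃ ξ : V → V → ℝ,
      IsCoupling (muEN H x) (muEN H y) ξ ∧
      c = ∑ u, ∑ v, (hdist H u v : ℝ) * ξ u v}, (0:ℝ) ≤ c := by
    rintro c ⟨ξ, ⟨hpos, hrow, hcol⟩, rfl⟩
    apply Finset.sum_nonneg; intro u _
    apply Finset.sum_nonneg; intro v _
    exact mul_nonneg (hdnn u v) (hpos u v)
  have hbdd : BddBelow {c | ∃ ξ : V → V → ℝ,
      IsCoupling (muEN H x) (muEN H y) ξ ∧
      c = ∑ u, ∑ v, (hdist H u v : ℝ) * ξ u v} := ⟨0, fun c hc => hSnonneg c hc⟩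
  have hprod : ∃ c, c ∈ {c | ∃ ξ : V → V → ℝ,
      IsCoupling (muEN H x) (muEN H y) ξ ∧
      c = ∑ u, ∑ v, (hdist H u v : ℝ) * ξ u v} := by
    refine ⟨_, fun u v => muEN H x u * muEN H y v, ⟨?_, ?_, ?_⟩, rfl⟩
    · intro u v; exact mul_nonneg (muEN_nonneg H x u) (muEN_nonneg H y v)
    · intro u; rw [← Finset.mul_sum, muEN_sum H y hy, mul_one]
    · intro v; rw [← Finset.sum_mul, muEN_sum H x hx, one_mul]
  have hdxy : (1:ℝ) ≤ (hdist H x y : ℝ) := by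
    exact_mod_cast one_le_hdist hxy hcomp
  constructor
  · -- curvature 1 implies equal neighbourhoods
    intro hκ
    have hW0 : W1 (fun u v => (hdist H u v : ℝ)) (muEN H x) (muEN H y) = 0 := by
      unfold kappaEN at hκ
      have hq : W1 (fun u v => (hdist H u v : ℝ)) (muEN H x) (muEN H y)
          / (hdist H x y : ℝ) = 0 := by linarith
      rcases div_eq_zero_iff.mp hq with h | h
      · exact h
      · linarith
    by_contra hne
    push_neg at hne
    obtain ⟨z, hz⟩ := hne
    have hcase : (HNbr H x z ∧ ¬ HNbr H y z) ∨ (¬ HNbr H x z ∧ HNbr H y z) := by tauto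
    have hkey : ∀ δ : ℝ, 0 < δ →
        (∀ c ∈ {c | ∃ ξ : V → V → ℝ,
          IsCoupling (muEN H x) (muEN H y) ξ ∧
          c = ∑ u, ∑ v, (hdist H u v : ℝ) * ξ u v}, δ ≤ c) → False := by
      intro δ hδ hall
      have hsinf := le_csInf hprod hall
      rw [show sInf {c | ∃ ξ : V → V → ℝ,
          IsCoupling (muEN H x) (muEN H y) ξ ∧
          c = ∑ u, ∑ v, (hdist H u v : ℝ) * ξ u v}
        = W1 (fun u v => (hdist H u v : ℝ)) (muEN H x) (muEN H y) from rfl, hW0] at hsinf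
      linarith
    rcases hcase with ⟨hxz, hyz⟩ | ⟨hxz, hyz⟩
    · -- z is a neighbour of x but not of y
      refine hkey (muEN H x z) (muEN_pos hxz) ?_
      rintro c ⟨ξ, ⟨hpos, hrow, hcol⟩, rfl⟩
      have step1 : ∑ v, (hdist H z v : ℝ) * ξ z v ≤ ∑ u, ∑ v, (hdist H u v : ℝ) * ξ u v := by
        apply Finset.single_le_sum (f := fun u => ∑ v, (hdist H u v : ℝ) * ξ u v)
          (fun u _ => Finset.sum_nonneg fun v _ => mul_nonneg (hdnn u v) (hpos u v))
          (Finset.mem_univ z)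
      have step2 : ∀ v : V, ξ z v ≤ (hdist H z v : ℝ) * ξ z v := by
        intro v
        by_cases hv0 : ξ z v = 0
        · simp [hv0]
        · have hξpos : 0 < ξ z v := lt_of_le_of_ne (hpos z v) (Ne.symm hv0)
          have hμyv : 0 < muEN H y v := by
            have hle : ξ z v ≤ ∑ u, ξ u v :=
              Finset.single_le_sum (fun u _ => hpos u v) (Finset.mem_univ z)
            rw [hcol v] at hle
            linarith
          have hyv : HNbr H y v := by
            by_contra hn
            rw [muEN_of_not_nbr hn] at hμyv
            linarith
          have hvz : z ≠ v := by
            rintro rfl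
            exact hyz hyv
          have h1d : (1:ℝ) ≤ (hdist H z v : ℝ) := by
            exact_mod_cast dist_ge_one hcomp hxz hyv hvz
          calc ξ z v = 1 * ξ z v := (one_mul _).symm
            _ ≤ (hdist H z v : ℝ) * ξ z v :=
              mul_le_mul_of_nonneg_right h1d (le_of_lt hξpos)
      calc muEN H x z = ∑ v, ξ z v := (hrow z).symm
        _ ≤ ∑ v, (hdist H z v : ℝ) * ξ z v := Finset.sum_le_sum fun v _ => step2 v
        _ ≤ _ := step1
    · -- z is a neighbour of y but not of x
      refine hkey (muEN H y z) (muEN_pos hyz) ?_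
      rintro c ⟨ξ, ⟨hpos, hrow, hcol⟩, rfl⟩
      have step1 : ∑ u, (hdist H u z : ℝ) * ξ u z ≤ ∑ u, ∑ v, (hdist H u v : ℝ) * ξ u v := by
        apply Finset.sum_le_sum
        intro u _
        exact Finset.single_le_sum (f := fun v => (hdist H u v : ℝ) * ξ u v)
          (fun v _ => mul_nonneg (hdnn u v) (hpos u v)) (Finset.mem_univ z)
      have step2 : ∀ u : V, ξ u z ≤ (hdist H u z : ℝ) * ξ u z := by
        intro u
        by_cases hu0 : ξ u z = 0
        · simp [hu0]
        · have hξpos : 0 < ξ u z := lt_of_le_of_ne (hpos u z) (Ne.symm hu0)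
          have hμxu : 0 < muEN H x u := by
            have hle : ξ u z ≤ ∑ v, ξ u v :=
              Finset.single_le_sum (fun v _ => hpos u v) (Finset.mem_univ z)
            rw [hrow u] at hle
            linarith
          have hxu : HNbr H x u := by
            by_contra hn
            rw [muEN_of_not_nbr hn] at hμxu
            linarith
          have huz : u ≠ z := by
            rintro rfl
            exact hxz hxu
          have h1d : (1:ℝ) ≤ (hdist H u z : ℝ) := by
            exact_mod_cast dist_ge_one hcomp hxu hyz huz
          calc ξ u z = 1 * ξ u z := (one_mul _).symm
            _ ≤ (hdist H u z : ℝ) * ξ u z :=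
              mul_le_mul_of_nonneg_right h1d (le_of_lt hξpos)
      calc muEN H y z = ∑ u, ξ u z := (hcol z).symm
        _ ≤ ∑ u, (hdist H u z : ℝ) * ξ u z := Finset.sum_le_sum fun u _ => step2 u
        _ ≤ _ := step1
  · -- equal neighbourhoods imply curvature 1
    intro hNN
    have hFeq : HNbrFinset H x = HNbrFinset H y := by
      ext z
      simp only [mem_HNbrFinset]
      exact hNN z
    have hμeq : muEN H x = muEN H y := by
      funext z
      by_cases h : HNbr H x z
      · simp [muEN, h, (hNN z).mp h, hFeq]
      · rw [muEN_of_not_nbr h, muEN_of_not_nbr (fun h' => h ((hNN z).mpr h'))]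
    have hcoup : IsCoupling (muEN H x) (muEN H y)
        (fun u v => if u = v then muEN H x u else 0) := by
      refine ⟨?_, ?_, ?_⟩
      · intro u v
        dsimp only
        split
        · exact muEN_nonneg H x u
        · exact le_refl 0
      · intro u; simp
      · intro v; simp [hμeq]
    have hcost : ∑ u, ∑ v, (hdist H u v : ℝ) * (if u = v then muEN H x u else 0) = 0 := by
      apply Finset.sum_eq_zero
      intro u _
      apply Finset.sum_eq_zero
      intro v _
      by_cases h : u = v
      · subst h
        simp [hdist_self]
      · simp [h]
    have h0mem : (0:ℝ) ∈ {c | ∃ ξ : V → V → ℝ,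
        IsCoupling (muEN H x) (muEN H y) ξ ∧
        c = ∑ u, ∑ v, (hdist H u v : ℝ) * ξ u v} :=
      ⟨_, hcoup, hcost.symm⟩
    have hW0 : W1 (fun u v => (hdist H u v : ℝ)) (muEN H x) (muEN H y) = 0 := by
      apply le_antisymm
      · exact csInf_le hbdd h0mem
      · exact le_csInf ⟨0, h0mem⟩ hSnonneg
    unfold kappaEN
    rw [hW0]
    simp
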